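/- Let A ∈ ℝ^{m×n}. Let U ∈ ℝ^{m×s₁}, V ∈ ℝ^{n×s₂} and U' ∈ ℝ^{m×s₁'}, V' ∈ ℝ^{n×s₂'} all have orthonormal columns, and suppose the search subspaces are nested: span(U) ⊆ span(U') and span(V) ⊆ span(V'). Let θᵢ and θᵢ' denote the i-th largest singular values of Uᵀ A V and U'ᵀ A V', respectively, and σᵢ the i-th largest singular value of A. Then θᵢ ≤ θᵢ' ≤ σᵢ for every i = 1, …, min(s₁, s₂); i.e., the Ritz singular values increase monotonically toward the singular values as the search subspaces expand. -/

import Mathlib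

open Matrix

/-- The `i`-th largest singular value (0-based) of a real `m×n` matrix:
the square root of the `i`-th largest eigenvalue of `Aᵀ A`, and `0` for `i ≥ n`. -/
noncomputable def singularValue {m n : ℕ} (A : Matrix (Fin m) (Fin n) ℝ) (i : ℕ) : ℝ :=
  if h : i < n then
    Real.sqrt (((show (Aᵀ * A).IsHermitian by
      rw [← Matrix.conjTranspose_eq_transpose_of_trivial]; exact Matrix.isHermitian_conjTranspose_mul_self A).eigenvalues ∘
      Tuple.sort ((show (Aᵀ * A).IsHermitian by
      rw [← Matrix.conjTranspose_eq_transpose_of_trivial]; exact Matrix.isHermitian_conjTranspose_mul_self A).eigenvalues))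
      ((⟨i, h⟩ : Fin n).rev))
  else 0

lemma dot_mulVec_left {m n : ℕ} (Y : Matrix (Fin m) (Fin n) ℝ) (s : Fin n → ℝ) (t : Fin m → ℝ) :
    (Y *ᵥ s) ⬝ᵥ t = s ⬝ᵥ (Yᵀ *ᵥ t) := by
  rw [Matrix.dotProduct_mulVec, Matrix.vecMul_transpose, dotProduct_comm]

lemma sum_dot {n : ℕ} {ι : Type*} (s : Finset ι) (f : ι → (Fin n → ℝ)) (y : Fin n → ℝ) :
    (∑ j ∈ s, f j) ⬝ᵥ y = ∑ j ∈ s, f j ⬝ᵥ y := by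
  simp only [dotProduct, Finset.sum_apply, Finset.sum_mul]
  rw [Finset.sum_comm]

lemma dot_sum {n : ℕ} {ι : Type*} (s : Finset ι) (y : Fin n → ℝ) (f : ι → (Fin n → ℝ)) :
    y ⬝ᵥ (∑ j ∈ s, f j) = ∑ j ∈ s, y ⬝ᵥ f j := by
  rw [dotProduct_comm, sum_dot]
  simp [dotProduct_comm]

lemma evb_dot {n : ℕ} {M : Matrix (Fin n) (Fin n) ℝ} (hM : M.IsHermitian) (j k : Fin n) :
    (hM.eigenvectorBasis j : Fin n → ℝ) ⬝ᵥ (hM.eigenvectorBasis k : Fin n → ℝ)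
      = if j = k then 1 else 0 := by
  have h := orthonormal_iff_ite.mp hM.eigenvectorBasis.orthonormal j k
  simpa [PiLp.inner_apply, dotProduct, RCLike.inner_apply, conj_trivial, mul_comm] using h

lemma li_of_ortho {n : ℕ} {ι : Type*} [Fintype ι] [DecidableEq ι] (w : ι → (Fin n → ℝ))
    (h : ∀ j k, w j ⬝ᵥ w k = if j = k then 1 else 0) : LinearIndependent ℝ w := by
  rw [linearIndependent_iff']
  intro s g hg i hi
  have h2 := congrArg (fun x => x ⬝ᵥ w i) hg
  simp only [sum_dot, smul_dotProduct, h, zero_dotProduct, smul_eq_mul,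
    mul_ite, mul_one, mul_zero] at h2
  rwa [Finset.sum_ite_eq' s i g, if_pos hi] at h2

lemma dot_sum_sum {n : ℕ} {ι : Type*} [Fintype ι] [DecidableEq ι] (w : ι → (Fin n → ℝ))
    (h : ∀ j k, w j ⬝ᵥ w k = if j = k then 1 else 0) (c d : ι → ℝ) :
    (∑ j, c j • w j) ⬝ᵥ (∑ k, d k • w k) = ∑ j, c j * d j := by
  rw [sum_dot]
  simp only [smul_dotProduct, dot_sum, dotProduct_smul, h, smul_eq_mul,
    mul_ite, mul_one, mul_zero]
  congr 1; ext j
  rw [Finset.mul_sum]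
  simp [mul_ite, Finset.sum_ite_eq]

section eig
variable {n : ℕ} {M : Matrix (Fin n) (Fin n) ℝ} (hM : M.IsHermitian)

lemma ortho_sub {ι : Type*} [DecidableEq ι] (e : ι → Fin n) (he : Function.Injective e) :
    ∀ j k, (hM.eigenvectorBasis (e j) : Fin n → ℝ) ⬝ᵥ (hM.eigenvectorBasis (e k) : Fin n → ℝ)
      = if j = k then 1 else 0 := by
  intro j k
  rw [evb_dot hM]
  simp [he.eq_iff]

lemma span_quad {ι : Type*} [Fintype ι] [DecidableEq ι] (e : ι → Fin n)
    (he : Function.Injective e) {x : Fin n → ℝ}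
    (hx : x ∈ Submodule.span ℝ (Set.range fun j => (hM.eigenvectorBasis (e j) : Fin n → ℝ))) :
    ∃ c : ι → ℝ, x ⬝ᵥ x = ∑ j, (c j)^2 ∧
      x ⬝ᵥ (M *ᵥ x) = ∑ j, hM.eigenvalues (e j) * (c j)^2 := by
  set w : ι → (Fin n → ℝ) := fun j => (hM.eigenvectorBasis (e j) : Fin n → ℝ) with hw
  obtain ⟨c, hc⟩ := Submodule.mem_span_range_iff_exists_fun ℝ |>.mp hx
  have hMx : M *ᵥ x = ∑ j, (hM.eigenvalues (e j) * c j) • w j := by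
    rw [← hc, ← Matrix.mulVecLin_apply, map_sum]
    refine Finset.sum_congr rfl fun j _ => ?_
    rw [_root_.map_smul, Matrix.mulVecLin_apply, hw]
    rw [show M *ᵥ (hM.eigenvectorBasis (e j) : Fin n → ℝ)
        = hM.eigenvalues (e j) • (hM.eigenvectorBasis (e j) : Fin n → ℝ) from
      hM.mulVec_eigenvectorBasis (e j), smul_smul, mul_comm]
  refine ⟨c, ?_, ?_⟩
  · rw [← hc, dot_sum_sum w (ortho_sub hM e he)]
    simp [sq]
  · rw [hMx, ← hc, dot_sum_sum w (ortho_sub hM e he)]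
    refine Finset.sum_congr rfl fun j _ => ?_
    ring

lemma span_finrank {ι : Type*} [Fintype ι] [DecidableEq ι] (e : ι → Fin n)
    (he : Function.Injective e) :
    Module.finrank ℝ (Submodule.span ℝ
      (Set.range fun j => (hM.eigenvectorBasis (e j) : Fin n → ℝ))) = Fintype.card ι :=
  finrank_span_eq_card (li_of_ortho _ (ortho_sub hM e he))

end eig

section AB
variable {n : ℕ} {M : Matrix (Fin n) (Fin n) ℝ} (hM : M.IsHermitian)

lemma lemmaA (r : Fin n) :
    ∃ S : Submodule ℝ (Fin n → ℝ), Module.finrank ℝ S = n - r.val ∧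
      ∀ x ∈ S, hM.eigenvalues (Tuple.sort hM.eigenvalues r) * (x ⬝ᵥ x) ≤ x ⬝ᵥ (M *ᵥ x) := by
  set e : ↥(Finset.Ici r) → Fin n := fun j => Tuple.sort hM.eigenvalues j.1 with he'
  have he : Function.Injective e :=
    (Tuple.sort hM.eigenvalues).injective.comp Subtype.val_injective
  refine ⟨Submodule.span ℝ (Set.range fun j => (hM.eigenvectorBasis (e j) : Fin n → ℝ)),
    (span_finrank hM e he).trans (by rw [Fintype.card_coe, Fin.card_Ici]), ?_⟩
  · intro x hx
    obtain ⟨c, hc1, hc2⟩ := span_quad hM e he hx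
    rw [hc1, hc2, Finset.mul_sum]
    refine Finset.sum_le_sum fun j _ => ?_
    have hle : hM.eigenvalues (Tuple.sort hM.eigenvalues r) ≤ hM.eigenvalues (e j) :=
      Tuple.monotone_sort hM.eigenvalues (Finset.mem_Ici.mp j.2)
    nlinarith [sq_nonneg (c j)]

lemma lemmaB (r : Fin n) (S : Submodule ℝ (Fin n → ℝ))
    (hS : n < Module.finrank ℝ S + (r.val + 1)) :
    ∃ x ∈ S, x ≠ 0 ∧ x ⬝ᵥ (M *ᵥ x) ≤ hM.eigenvalues (Tuple.sort hM.eigenvalues r) * (x ⬝ᵥ x) := by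
  set e : ↥(Finset.Iic r) → Fin n := fun j => Tuple.sort hM.eigenvalues j.1 with he'
  have he : Function.Injective e :=
    (Tuple.sort hM.eigenvalues).injective.comp Subtype.val_injective
  set T : Submodule ℝ (Fin n → ℝ) := Submodule.span ℝ (Set.range fun j => (hM.eigenvectorBasis (e j) : Fin n → ℝ)) with hT
  have hTrank : Module.finrank ℝ T = r.val + 1 :=
    (span_finrank hM e he).trans (by rw [Fintype.card_coe, Fin.card_Iic])
  have hsum := Submodule.finrank_sup_add_finrank_inf_eq S T
  have hsup : Module.finrank ℝ ↥(S ⊔ T) ≤ n := by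
    have := Submodule.finrank_le (S ⊔ T)
    rwa [Module.finrank_fin_fun] at this
  have hpos : 0 < Module.finrank ℝ ↥(S ⊓ T) := by
    rw [hTrank] at hsum
    omega
  obtain ⟨⟨x, hxST⟩, hx0⟩ := Module.finrank_pos_iff_exists_ne_zero.mp hpos
  have hxS : x ∈ S := hxST.1
  have hxT : x ∈ T := hxST.2
  refine ⟨x, hxS, by simpa [Submodule.mk_eq_zero] using hx0, ?_⟩
  obtain ⟨c, hc1, hc2⟩ := span_quad hM e he hxT
  rw [hc1, hc2, Finset.mul_sum]
  refine Finset.sum_le_sum fun j _ => ?_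
  have hle : hM.eigenvalues (e j) ≤ hM.eigenvalues (Tuple.sort hM.eigenvalues r) :=
    Tuple.monotone_sort hM.eigenvalues (Finset.mem_Iic.mp j.2)
  nlinarith [sq_nonneg (c j)]

end AB

lemma mulVec_inj {q b : ℕ} (Z : Matrix (Fin q) (Fin b) ℝ) (hZ : Zᵀ * Z = 1) :
    Function.Injective (Matrix.mulVecLin Z) := by
  intro x y hxy
  have h1 : Zᵀ *ᵥ (Z *ᵥ x) = Zᵀ *ᵥ (Z *ᵥ y) := by
    simpa [Matrix.mulVecLin_apply] using congrArg (fun v => Zᵀ *ᵥ v) hxy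
  simpa [Matrix.mulVec_mulVec, hZ] using h1

lemma dot_Z {q b : ℕ} (Z : Matrix (Fin q) (Fin b) ℝ) (hZ : Zᵀ * Z = 1)
    (x y : Fin b → ℝ) : (Z *ᵥ x) ⬝ᵥ (Z *ᵥ y) = x ⬝ᵥ y := by
  rw [dot_mulVec_left, Matrix.mulVec_mulVec, hZ, Matrix.one_mulVec]

lemma eig_key {q b : ℕ} {N : Matrix (Fin q) (Fin q) ℝ} {N' : Matrix (Fin b) (Fin b) ℝ}
    (hN : N.IsHermitian) (hN' : N'.IsHermitian) (Z : Matrix (Fin q) (Fin b) ℝ)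
    (hZ : Zᵀ * Z = 1)
    (hq : ∀ x : Fin b → ℝ, x ⬝ᵥ (N' *ᵥ x) ≤ (Z *ᵥ x) ⬝ᵥ (N *ᵥ (Z *ᵥ x)))
    (i : ℕ) (hib : i < b) (hiq : i < q) :
    hN'.eigenvalues (Tuple.sort hN'.eigenvalues (Fin.rev ⟨i, hib⟩)) ≤
      hN.eigenvalues (Tuple.sort hN.eigenvalues (Fin.rev ⟨i, hiq⟩)) := by
  obtain ⟨S', hS'rank, hS'⟩ := lemmaA hN' (Fin.rev ⟨i, hib⟩)
  have hrank' : Module.finrank ℝ S' = i + 1 := by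
    rw [hS'rank, Fin.val_rev, Fin.val_mk]; omega
  set S : Submodule ℝ (Fin q → ℝ) := S'.map (Matrix.mulVecLin Z) with hS
  have hSrank : Module.finrank ℝ S = i + 1 := by
    rw [hS, ← hrank']
    exact (Submodule.equivMapOfInjective _ (mulVec_inj Z hZ) S').finrank_eq.symm
  have hdim : q < Module.finrank ℝ S + ((Fin.rev ⟨i, hiq⟩ : Fin q).val + 1) := by
    rw [hSrank, Fin.val_rev, Fin.val_mk]; omega
  obtain ⟨y, hyS, hy0, hyB⟩ := lemmaB hN (Fin.rev ⟨i, hiq⟩) S hdim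
  obtain ⟨x, hxS', hxy⟩ := hyS
  rw [Matrix.mulVecLin_apply] at hxy
  have hx0 : x ≠ 0 := by
    rintro rfl
    exact hy0 (by rw [← hxy, Matrix.mulVec_zero])
  have hnn : 0 ≤ x ⬝ᵥ x := Finset.sum_nonneg fun i _ => mul_self_nonneg _
  have hxx : 0 < x ⬝ᵥ x := by
    rcases lt_or_eq_of_le hnn with h | h
    · exact h
    · exact absurd ((dotProduct_self_eq_zero).mp h.symm) hx0
  have h1 := hS' x hxS'
  have h2 := hq x
  rw [hxy] at h2
  have hyx : y ⬝ᵥ y = x ⬝ᵥ x := by rw [← hxy]; exact dot_Z Z hZ x x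
  rw [hyx] at hyB
  exact le_of_mul_le_mul_right (by linarith) hxx


lemma cols_le {q b : ℕ} (Z : Matrix (Fin q) (Fin b) ℝ) (hZ : Zᵀ * Z = 1) : b ≤ q := by
  have h1 : (1 : Matrix (Fin b) (Fin b) ℝ).rank = b := by
    rw [Matrix.rank_one]; exact Fintype.card_fin b
  have h2 := Matrix.rank_mul_le_right Zᵀ Z
  have h3 := Matrix.rank_le_card_height Z
  rw [hZ] at h2
  rw [Fintype.card_fin] at h3
  omega

lemma quad_form {p q : ℕ} (C : Matrix (Fin p) (Fin q) ℝ) (x : Fin q → ℝ) :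
    x ⬝ᵥ ((Cᵀ * C) *ᵥ x) = (C *ᵥ x) ⬝ᵥ (C *ᵥ x) := by
  rw [dot_mulVec_left, Matrix.mulVec_mulVec]

lemma proj_contract {p a : ℕ} (W : Matrix (Fin p) (Fin a) ℝ) (hW : Wᵀ * W = 1)
    (v : Fin p → ℝ) : (Wᵀ *ᵥ v) ⬝ᵥ (Wᵀ *ᵥ v) ≤ v ⬝ᵥ v := by
  set u : Fin p → ℝ := W *ᵥ (Wᵀ *ᵥ v) with hu
  have h1 : (Wᵀ *ᵥ v) ⬝ᵥ (Wᵀ *ᵥ v) = v ⬝ᵥ u := by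
    rw [dot_mulVec_left, Matrix.transpose_transpose]
  have h2 : u ⬝ᵥ u = v ⬝ᵥ u := by
    nth_rewrite 1 [hu]
    rw [dot_mulVec_left]
    have : Wᵀ *ᵥ u = Wᵀ *ᵥ v := by
      rw [hu, Matrix.mulVec_mulVec, Matrix.mulVec_mulVec, hW, Matrix.one_mul]
    rw [this, h1]
  have h3 : 0 ≤ (v - u) ⬝ᵥ (v - u) := Finset.sum_nonneg fun i _ => mul_self_nonneg _
  rw [sub_dotProduct, dotProduct_sub, dotProduct_sub,
    dotProduct_comm u v] at h3
  linarith

lemma key {p q a b : ℕ} (B : Matrix (Fin p) (Fin q) ℝ) (W : Matrix (Fin p) (Fin a) ℝ)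
    (Z : Matrix (Fin q) (Fin b) ℝ) (hW : Wᵀ * W = 1) (hZ : Zᵀ * Z = 1)
    (i : ℕ) (hib : i < b) :
    singularValue (Wᵀ * B * Z) i ≤ singularValue B i := by
  have hiq : i < q := lt_of_lt_of_le hib (cols_le Z hZ)
  rw [singularValue, singularValue, dif_pos hib, dif_pos hiq]
  apply Real.sqrt_le_sqrt
  simp only [Function.comp_apply]
  refine eig_key (show (Bᵀ * B).IsHermitian by
      rw [← Matrix.conjTranspose_eq_transpose_of_trivial]; exact Matrix.isHermitian_conjTranspose_mul_self B)
    (show ((Wᵀ * B * Z)ᵀ * (Wᵀ * B * Z)).IsHermitian by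
      rw [← Matrix.conjTranspose_eq_transpose_of_trivial]; exact Matrix.isHermitian_conjTranspose_mul_self _) Z hZ (fun x => ?_) i hib hiq
  rw [quad_form, quad_form]
  have hC : (Wᵀ * B * Z) *ᵥ x = Wᵀ *ᵥ (B *ᵥ (Z *ᵥ x)) := by
    rw [Matrix.mulVec_mulVec, Matrix.mulVec_mulVec]
  rw [hC]
  exact proj_contract W hW (B *ᵥ (Z *ᵥ x))

lemma col_eq {m k l : ℕ} (M : Matrix (Fin m) (Fin k) ℝ) (N : Matrix (Fin k) (Fin l) ℝ)
    (j : Fin l) : M *ᵥ (Nᵀ j) = (M * N)ᵀ j := by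
  ext r
  simp [Matrix.mulVec, dotProduct, Matrix.mul_apply, Matrix.transpose_apply]

lemma proj_fix {m s s' : ℕ} (U : Matrix (Fin m) (Fin s) ℝ) (U' : Matrix (Fin m) (Fin s') ℝ)
    (hU' : U'ᵀ * U' = 1)
    (h : Submodule.span ℝ (Set.range Uᵀ) ≤ Submodule.span ℝ (Set.range U'ᵀ)) :
    U' * (U'ᵀ * U) = U := by
  have fix : ∀ x ∈ Submodule.span ℝ (Set.range U'ᵀ), (U' * U'ᵀ) *ᵥ x = x := by
    intro x hx
    induction hx using Submodule.span_induction with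
    | mem x hx =>
        obtain ⟨j, rfl⟩ := hx
        rw [col_eq]
        rw [Matrix.mul_assoc, hU', Matrix.mul_one]
    | zero => simp
    | add x y _ _ hx hy => simp [Matrix.mulVec_add, hx, hy]
    | smul c x _ hx => simp [Matrix.mulVec_smul, hx]
  have hcol : ∀ j, (U' * U'ᵀ) *ᵥ (Uᵀ j) = Uᵀ j := fun j =>
    fix _ (h (Submodule.subset_span ⟨j, rfl⟩))
  rw [← Matrix.mul_assoc]
  ext k j
  have h2 := congrFun ((col_eq (U' * U'ᵀ) U j).symm.trans (hcol j)) k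
  exact h2


/-- Monotonicity of the Ritz singular values under expansion of the search subspaces:
if `span(U) ⊆ span(U')` and `span(V) ⊆ span(V')` (all with orthonormal columns), then
`θᵢ ≤ θᵢ' ≤ σᵢ`, where `θᵢ`, `θᵢ'`, `σᵢ` are the `i`-th largest singular values of
`Uᵀ A V`, `U'ᵀ A V'`, and `A` respectively (0-based `i`). -/
theorem ritz_singular_value_monotone {m n s₁ s₂ s₁' s₂' : ℕ}
    (A : Matrix (Fin m) (Fin n) ℝ)
    (U : Matrix (Fin m) (Fin s₁) ℝ) (V : Matrix (Fin n) (Fin s₂) ℝ)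
    (U' : Matrix (Fin m) (Fin s₁') ℝ) (V' : Matrix (Fin n) (Fin s₂') ℝ)
    (hU : Uᵀ * U = 1) (hV : Vᵀ * V = 1) (hU' : U'ᵀ * U' = 1) (hV' : V'ᵀ * V' = 1)
    (hUU' : Submodule.span ℝ (Set.range Uᵀ) ≤ Submodule.span ℝ (Set.range U'ᵀ))
    (hVV' : Submodule.span ℝ (Set.range Vᵀ) ≤ Submodule.span ℝ (Set.range V'ᵀ))
    (i : ℕ) (hi : i < min s₁ s₂) :
    singularValue (Uᵀ * A * V) i ≤ singularValue (U'ᵀ * A * V') i ∧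
    singularValue (U'ᵀ * A * V') i ≤ singularValue A i := by
  have hUfix := proj_fix U U' hU' hUU'
  have hVfix := proj_fix V V' hV' hVV'
  have hWW : (U'ᵀ * U)ᵀ * (U'ᵀ * U) = 1 := by
    rw [Matrix.transpose_mul, Matrix.transpose_transpose, Matrix.mul_assoc, hUfix, hU]
  have hZZ : (V'ᵀ * V)ᵀ * (V'ᵀ * V) = 1 := by
    rw [Matrix.transpose_mul, Matrix.transpose_transpose, Matrix.mul_assoc, hVfix, hV]
  have hEq : Uᵀ * A * V = (U'ᵀ * U)ᵀ * (U'ᵀ * A * V') * (V'ᵀ * V) := by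
    calc Uᵀ * A * V = (U' * (U'ᵀ * U))ᵀ * A * (V' * (V'ᵀ * V)) := by
          rw [hUfix, hVfix]
    _ = (U'ᵀ * U)ᵀ * (U'ᵀ * A * V') * (V'ᵀ * V) := by
          simp only [Matrix.transpose_mul, Matrix.transpose_transpose, Matrix.mul_assoc]
  have hi₂ : i < s₂ := lt_of_lt_of_le hi (min_le_right _ _)
  constructor
  · rw [hEq]
    exact key (U'ᵀ * A * V') (U'ᵀ * U) (V'ᵀ * V) hWW hZZ i hi₂
  · have hs : s₂ ≤ s₂' := cols_le (V'ᵀ * V) hZZ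
    exact key A U' V' hU' hV' i (lt_of_lt_of_le hi₂ hs)
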